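/- Let ≻₁ and ≻₂ be hope-and-prepare preferences with representations (u, C₁, D₁) and (u, C₂, D₂) respectively, with the same utility function u. Then ≻₁ is more ambiguity averse than ≻₂ if and only if C₂ ⊆ C₁. -/

import Mathlib

/-!
Framework: Anscombe–Aumann acts, finitely additive probability measures,
simple acts, hope-and-prepare preferences (Bastianello–Hill style setup).
-/

open Set

section Framework

variable (S : Type*) [MeasurableSpace S]

/-- The measurable sets (events) of `S`, as a subtype. -/
abbrev MSet := {A : Set S // MeasurableSet A}

/-- Finitely additive probability measures on `(S, Σ)`, viewed as real-valued
set functions on events.  The weak* topology is the topology of pointwise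
convergence on events, i.e. the product topology on `MSet S → ℝ`. -/
def ProbCharges : Set (MSet S → ℝ) :=
  {p | (∀ A, 0 ≤ p A) ∧ p ⟨Set.univ, MeasurableSet.univ⟩ = 1 ∧
    ∀ A B : MSet S, Disjoint A.1 B.1 → p ⟨A.1 ∪ B.1, A.2.union B.2⟩ = p A + p B}

end Framework

section Fns

variable {S : Type*} [MeasurableSpace S]

/-- `φ : S → ℝ` is a measurable simple function (an element of `B₀(Σ)`). -/
def IsSimpleFn (φ : S → ℝ) : Prop :=
  (Set.range φ).Finite ∧ ∀ y : ℝ, MeasurableSet (φ ⁻¹' {y})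

/-- The integral `∫ φ dp` of a simple function `φ` against a finitely additive
measure `p` (junk value `0` if `φ` is not simple). -/
noncomputable def fInt (p : MSet S → ℝ) (φ : S → ℝ) : ℝ :=
  @dite _ (IsSimpleFn φ) (Classical.dec _)
    (fun h => ∑ y ∈ h.1.toFinset, y * p ⟨φ ⁻¹' {y}, h.2 y⟩) (fun _ => 0)

/-- A functional `I : B₀(Σ) → ℝ` is monotonic. -/
def MonotonicFn (I : (S → ℝ) → ℝ) : Prop :=
  ∀ φ ψ, IsSimpleFn φ → IsSimpleFn ψ → (∀ s, φ s ≤ ψ s) → I φ ≤ I ψ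

/-- A functional `I : B₀(Σ) → ℝ` is constant-linear: `I(aφ + b) = a I(φ) + b`
for `a ≥ 0`, `b ∈ ℝ`. -/
def ConstLinearFn (I : (S → ℝ) → ℝ) : Prop :=
  ∀ φ, IsSimpleFn φ → ∀ a : ℝ, 0 ≤ a → ∀ b : ℝ,
    I (fun s => a * φ s + b) = a * I φ + b

end Fns

section Acts

variable {S : Type*} [MeasurableSpace S] {V : Type*} [AddCommGroup V] [Module ℝ V]

/-- `f : S → V` is a simple act with outcomes in `X`: it is `X`-valued,
takes finitely many values and is `Σ`-measurable. -/
def IsAct (X : Set V) (f : S → V) : Prop :=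
  (∀ s, f s ∈ X) ∧ (Set.range f).Finite ∧ ∀ v : V, MeasurableSet (f ⁻¹' {v})

/-- Pointwise mixture `αf + (1-α)g` of two acts. -/
def mixAct (α : ℝ) (f g : S → V) : S → V := fun s => α • f s + (1 - α) • g s

/-- The constant act with outcome `x`. -/
def constAct (S : Type*) {V : Type*} (x : V) : S → V := fun _ => x

/-- `u : V → ℝ` is affine on the convex set `X`. -/
def IsAffineOn (u : V → ℝ) (X : Set V) : Prop :=
  ∀ x ∈ X, ∀ y ∈ X, ∀ α : ℝ, 0 ≤ α → α ≤ 1 →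
    u (α • x + (1 - α) • y) = α * u x + (1 - α) * u y

/-- `u` is non-constant on `X`. -/
def NonConstOn (u : V → ℝ) (X : Set V) : Prop := ∃ x ∈ X, ∃ y ∈ X, u x ≠ u y

/-- Expected utility `∫ u(f) dp` of the act `f` under the measure `p`. -/
noncomputable def EU (u : V → ℝ) (f : S → V) (p : MSet S → ℝ) : ℝ :=
  fInt p (fun s => u (f s))

/-- Worst-case expected utility of `f` over the set of scenarios `C`. -/
noncomputable def minEU (u : V → ℝ) (C : Set (MSet S → ℝ)) (f : S → V) : ℝ :=
  sInf (EU u f '' C)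

/-- Best-case expected utility of `f` over the set of scenarios `D`. -/
noncomputable def maxEU (u : V → ℝ) (D : Set (MSet S → ℝ)) (f : S → V) : ℝ :=
  sSup (EU u f '' D)

/-- `f` and `g` are incomparable (`f ⋈ g`). -/
def Incomp (R : (S → V) → (S → V) → Prop) (f g : S → V) : Prop := ¬ R f g ∧ ¬ R g f

end Acts

section Axioms

variable {S : Type*} [MeasurableSpace S] {V : Type*} [AddCommGroup V] [Module ℝ V]
variable (X : Set V) (R : (S → V) → (S → V) → Prop)

/-- Axiom 1: `≻` is asymmetric and transitive on acts, and its restriction to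
constant acts is non-trivial and negatively transitive. -/
def PrefAx1 : Prop :=
  (∀ f g, IsAct X f → IsAct X g → R f g → ¬ R g f) ∧
  (∀ f g h, IsAct X f → IsAct X g → IsAct X h → R f g → R g h → R f h) ∧
  (∃ x ∈ X, ∃ y ∈ X, R (constAct S x) (constAct S y)) ∧
  (∀ x ∈ X, ∀ y ∈ X, ∀ z ∈ X, ¬ R (constAct S x) (constAct S y) →
    ¬ R (constAct S y) (constAct S z) → ¬ R (constAct S x) (constAct S z))

/-- Axiom 2 (continuity). -/
def PrefAx2 : Prop :=
  ∀ f g h, IsAct X f → IsAct X g → IsAct X h →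
    IsOpen {α : Set.Icc (0 : ℝ) 1 | R (mixAct (α : ℝ) f g) h} ∧
    IsOpen {α : Set.Icc (0 : ℝ) 1 | R h (mixAct (α : ℝ) f g)}

/-- Axiom 3 (certainty independence). -/
def PrefAx3 : Prop :=
  ∀ f g, IsAct X f → IsAct X g → ∀ x ∈ X, ∀ α : ℝ, 0 < α → α < 1 →
    (R f g ↔ R (mixAct α f (constAct S x)) (mixAct α g (constAct S x)))

/-- Axiom 4: for any outcome `x`, the upper and lower contour sets at the
constant act `x` are convex. -/
def PrefAx4 : Prop :=
  ∀ x ∈ X,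
    (∀ f g, IsAct X f → IsAct X g → R f (constAct S x) → R g (constAct S x) →
      ∀ α : ℝ, 0 ≤ α → α ≤ 1 → R (mixAct α f g) (constAct S x)) ∧
    (∀ f g, IsAct X f → IsAct X g → R (constAct S x) f → R (constAct S x) g →
      ∀ α : ℝ, 0 ≤ α → α ≤ 1 → R (constAct S x) (mixAct α f g))

/-- Axiom 5 (monotonicity). -/
def PrefAx5 : Prop :=
  ∀ f g, IsAct X f → IsAct X g →
    (∀ s : S, R (constAct S (f s)) (constAct S (g s))) → R f g

/-- Axiom 6: if every outcome incomparable to `f` is incomparable to `g`,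
then `f` and `g` are incomparable. -/
def PrefAx6 : Prop :=
  ∀ f g, IsAct X f → IsAct X g →
    (∀ x ∈ X, Incomp R f (constAct S x) → Incomp R g (constAct S x)) → Incomp R f g

/-- Axiom 7: if `f ⋈ x`, `x ≻ g`, `g ⋈ y` and `f ≻ y`, then `f ≻ g`. -/
def PrefAx7 : Prop :=
  ∀ f g, IsAct X f → IsAct X g → ∀ x ∈ X, ∀ y ∈ X,
    Incomp R f (constAct S x) → R (constAct S x) g →
    Incomp R g (constAct S y) → R f (constAct S y) → R f g

end Axioms

section Reps

variable {S : Type*} [MeasurableSpace S] {V : Type*} [AddCommGroup V] [Module ℝ V]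

/-- `(u, C, D)` is a hope-and-prepare representation of `R`. -/
def IsHPRep (X : Set V) (R : (S → V) → (S → V) → Prop) (u : V → ℝ)
    (C D : Set (MSet S → ℝ)) : Prop :=
  IsAffineOn u X ∧ NonConstOn u X ∧
  C.Nonempty ∧ D.Nonempty ∧ C ⊆ ProbCharges S ∧ D ⊆ ProbCharges S ∧
  IsCompact C ∧ IsCompact D ∧ Convex ℝ C ∧ Convex ℝ D ∧ (C ∩ D).Nonempty ∧
  ∀ f g, IsAct X f → IsAct X g →
    (R f g ↔ (minEU u C g < minEU u C f ∧ maxEU u D g < maxEU u D f))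

/-- `(u, C)` is a Bewley representation of `R`. -/
def IsBewleyRep (X : Set V) (R : (S → V) → (S → V) → Prop) (u : V → ℝ)
    (C : Set (MSet S → ℝ)) : Prop :=
  IsAffineOn u X ∧ NonConstOn u X ∧
  C.Nonempty ∧ C ⊆ ProbCharges S ∧ IsCompact C ∧ Convex ℝ C ∧
  ∀ f g, IsAct X f → IsAct X g → (R f g ↔ ∀ p ∈ C, EU u g p < EU u f p)

/-- `(u, C, D)` is a twofold multi-prior representation of `R`. -/
def IsTwofoldRep (X : Set V) (R : (S → V) → (S → V) → Prop) (u : V → ℝ)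
    (C D : Set (MSet S → ℝ)) : Prop :=
  IsAffineOn u X ∧ NonConstOn u X ∧
  C.Nonempty ∧ D.Nonempty ∧ C ⊆ ProbCharges S ∧ D ⊆ ProbCharges S ∧
  IsCompact C ∧ IsCompact D ∧ Convex ℝ C ∧ Convex ℝ D ∧ (C ∩ D).Nonempty ∧
  ∀ f g, IsAct X f → IsAct X g → (R f g ↔ maxEU u D g < minEU u C f)

end Reps


section Aux

variable {S : Type*} [MeasurableSpace S]

lemma p_congr (p : MSet S → ℝ) {s t : Set S} {hs : MeasurableSet s} {ht : MeasurableSet t}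
    (h : s = t) : p ⟨s, hs⟩ = p ⟨t, ht⟩ := by subst h; rfl

lemma pc_empty {p : MSet S → ℝ} (hp : p ∈ ProbCharges S) (h : MeasurableSet (∅ : Set S)) :
    p ⟨∅, h⟩ = 0 := by
  have := hp.2.2 ⟨∅, h⟩ ⟨∅, h⟩ (by simp)
  have h2 : p ⟨(∅ : Set S) ∪ ∅, MeasurableSet.union h h⟩ = p ⟨∅, h⟩ :=
    p_congr p (by simp)
  rw [h2] at this
  linarith

lemma padd {p : MSet S → ℝ} (hp : p ∈ ProbCharges S) {ι : Type*} (B : ι → MSet S)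
    (t : Finset ι) (hd : ∀ i ∈ t, ∀ j ∈ t, i ≠ j → Disjoint (B i).1 (B j).1)
    (h : MeasurableSet (⋃ i ∈ t, (B i).1)) :
    p ⟨⋃ i ∈ t, (B i).1, h⟩ = ∑ i ∈ t, p (B i) := by
  classical
  induction t using Finset.induction_on with
  | empty =>
      have he : p ⟨⋃ i ∈ (∅ : Finset ι), (B i).1, h⟩ = p ⟨∅, MeasurableSet.empty⟩ :=
        p_congr p (by simp)
      rw [he, pc_empty hp]
      simp
  | @insert a s ha ih =>
      have hU : (⋃ i ∈ insert a s, (B i).1) = (B a).1 ∪ ⋃ i ∈ s, (B i).1 := by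
        simp
      have hms : MeasurableSet (⋃ i ∈ s, (B i).1) :=
        MeasurableSet.biUnion s.countable_toSet (fun i _ => (B i).2)
      have hdisj : Disjoint (B a).1 (⋃ i ∈ s, (B i).1) := by
        rw [Set.disjoint_iUnion₂_right]
        intro i hi
        exact hd a (Finset.mem_insert_self a s) i (Finset.mem_insert_of_mem hi)
          (fun he => ha (he ▸ hi))
      have := hp.2.2 (B a) ⟨_, hms⟩ hdisj
      rw [p_congr p (ht := (B a).2.union hms) hU, this, ih (fun i hi j hj hij =>
        hd i (Finset.mem_insert_of_mem hi) j (Finset.mem_insert_of_mem hj) hij) hms,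
        Finset.sum_insert ha]

lemma pc_nonneg {p : MSet S → ℝ} (hp : p ∈ ProbCharges S) (A : MSet S) : 0 ≤ p A := hp.1 A

lemma pc_le_one {p : MSet S → ℝ} (hp : p ∈ ProbCharges S) (A : MSet S) : p A ≤ 1 := by
  have := hp.2.2 A ⟨A.1ᶜ, A.2.compl⟩ disjoint_compl_right
  rw [p_congr p (ht := MeasurableSet.univ) (Set.union_compl_self A.1), hp.2.1] at this
  have := hp.1 ⟨A.1ᶜ, A.2.compl⟩
  linarith

/-- Composition of a finite-range measurable map with any function. -/
lemma comp_simple {α β : Type*} {φ : S → α} (hr : (Set.range φ).Finite)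
    (hm : ∀ a : α, MeasurableSet (φ ⁻¹' {a})) (g : α → β) :
    (Set.range (fun s => g (φ s))).Finite ∧
      ∀ b : β, MeasurableSet ((fun s => g (φ s)) ⁻¹' {b}) := by
  constructor
  · have : Set.range (fun s => g (φ s)) ⊆ g '' Set.range φ := by
      rintro _ ⟨s, rfl⟩; exact ⟨φ s, ⟨s, rfl⟩, rfl⟩
    exact (hr.image g).subset this
  · intro b
    have hset : ((fun s => g (φ s)) ⁻¹' {b}) =
        ⋃ a ∈ {a ∈ Set.range φ | g a = b}, φ ⁻¹' {a} := by
      ext s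
      simp only [Set.mem_preimage, Set.mem_singleton_iff, Set.mem_iUnion, Set.mem_sep_iff]
      constructor
      · intro h; exact ⟨φ s, ⟨⟨s, rfl⟩, h⟩, rfl⟩
      · rintro ⟨a, ⟨_, hga⟩, (rfl : φ s = a)⟩; exact hga
    rw [hset]
    exact MeasurableSet.biUnion (hr.sep _).countable (fun a _ => hm a)

/-- The integral of `g ∘ τ` where `τ` is a finite-range measurable map. -/
lemma fInt_partition {p : MSet S → ℝ} (hp : p ∈ ProbCharges S) {ι : Type*}
    (τ : S → ι) (T : Finset ι) (hcov : ∀ s, τ s ∈ T)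
    (hm : ∀ i : ι, MeasurableSet (τ ⁻¹' {i})) (g : ι → ℝ) :
    fInt p (fun s => g (τ s)) = ∑ i ∈ T, g i * p ⟨τ ⁻¹' {i}, hm i⟩ := by
  classical
  have hrτ : (Set.range τ).Finite := T.finite_toSet.subset (fun _ ⟨s, hs⟩ => hs ▸ hcov s)
  have hs : IsSimpleFn (fun s => g (τ s)) := comp_simple hrτ hm g
  rw [fInt, dif_pos hs]
  -- preimage description
  have hpre : ∀ y : ℝ, ((fun s => g (τ s)) ⁻¹' {y}) =
      ⋃ i ∈ T.filter (fun i => g i = y), τ ⁻¹' {i} := by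
    intro y
    ext s
    simp only [Set.mem_preimage, Set.mem_singleton_iff, Set.mem_iUnion, Finset.mem_filter]
    constructor
    · intro h; exact ⟨τ s, ⟨hcov s, h⟩, rfl⟩
    · rintro ⟨i, ⟨_, hgi⟩, (rfl : τ s = i)⟩; exact hgi
  have hval : ∀ y : ℝ, p ⟨(fun s => g (τ s)) ⁻¹' {y}, hs.2 y⟩ =
      ∑ i ∈ T.filter (fun i => g i = y), p ⟨τ ⁻¹' {i}, hm i⟩ := by
    intro y
    have hd : ∀ i ∈ T.filter (fun i => g i = y), ∀ j ∈ T.filter (fun i => g i = y),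
        i ≠ j → Disjoint (τ ⁻¹' {i}) (τ ⁻¹' {j}) := by
      intro i _ j _ hij
      apply Set.disjoint_left.mpr
      intro s hsi hsj
      exact hij ((Set.mem_preimage.mp hsi).symm.trans (Set.mem_preimage.mp hsj))
    have := padd hp (fun i => (⟨τ ⁻¹' {i}, hm i⟩ : MSet S)) (T.filter (fun i => g i = y)) hd
      (MeasurableSet.biUnion (T.filter _).countable_toSet (fun i _ => hm i))
    rw [p_congr p (hpre y)]
    exact this
  -- now compare the two sums
  have hsub : hs.1.toFinset ⊆ T.image g := by
    intro y hy
    rw [Set.Finite.mem_toFinset] at hy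
    obtain ⟨s, rfl⟩ := hy
    exact Finset.mem_image.mpr ⟨τ s, hcov s, rfl⟩
  calc ∑ y ∈ hs.1.toFinset, y * p ⟨(fun s => g (τ s)) ⁻¹' {y}, hs.2 y⟩
      = ∑ y ∈ T.image g, y * p ⟨(fun s => g (τ s)) ⁻¹' {y}, hs.2 y⟩ := by
        apply Finset.sum_subset hsub
        intro y _ hy
        have hemp : ((fun s => g (τ s)) ⁻¹' {y}) = ∅ := by
          ext s
          simp only [Set.mem_preimage, Set.mem_singleton_iff, Set.mem_empty_iff_false,
            iff_false]
          intro h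
          exact hy (by rw [Set.Finite.mem_toFinset]; exact ⟨s, h⟩)
        rw [p_congr p (ht := MeasurableSet.empty) hemp, pc_empty hp]
        ring
    _ = ∑ y ∈ T.image g, ∑ i ∈ T.filter (fun i => g i = y), g i * p ⟨τ ⁻¹' {i}, hm i⟩ := by
        refine Finset.sum_congr rfl (fun y _ => ?_)
        rw [hval y, Finset.mul_sum]
        refine Finset.sum_congr rfl (fun i hi => ?_)
        rw [(Finset.mem_filter.mp hi).2]
    _ = ∑ i ∈ T, g i * p ⟨τ ⁻¹' {i}, hm i⟩ :=
        Finset.sum_fiberwise_of_maps_to (fun i hi => Finset.mem_image_of_mem g hi)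
          (fun i => g i * p ⟨τ ⁻¹' {i}, hm i⟩)


open Classical in
/-- The atom map of a finite family of events. -/
noncomputable def tauF (F : Finset (MSet S)) (s : S) : Finset (MSet S) :=
  F.filter (fun A => s ∈ A.1)

lemma tauF_mem {F : Finset (MSet S)} {A : MSet S} {s : S} :
    A ∈ tauF F s ↔ A ∈ F ∧ s ∈ A.1 := by
  classical
  simp [tauF, Finset.mem_filter]

lemma tauF_mem_powerset (F : Finset (MSet S)) (s : S) : tauF F s ∈ F.powerset :=
  Finset.mem_powerset.mpr (fun A h => (tauF_mem.mp h).1)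

lemma tauF_measurable (F : Finset (MSet S)) (σ : Finset (MSet S)) :
    MeasurableSet (tauF F ⁻¹' {σ}) := by
  classical
  by_cases hσ : σ ⊆ F
  · have hset : (tauF F ⁻¹' {σ}) =
        ⋂ A ∈ (↑F : Set (MSet S)), (if A ∈ σ then A.1 else A.1ᶜ) := by
      ext s
      simp only [Set.mem_preimage, Set.mem_singleton_iff, Set.mem_iInter]
      constructor
      · intro h A hA
        by_cases hAσ : A ∈ σ
        · simp only [hAσ, if_true]
          exact (tauF_mem.mp (h ▸ hAσ)).2
        · simp only [hAσ, if_false, Set.mem_compl_iff]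
          intro hsA
          exact hAσ (h ▸ tauF_mem.mpr ⟨hA, hsA⟩)
      · intro h
        apply Finset.ext
        intro A
        rw [tauF_mem]
        constructor
        · rintro ⟨hAF, hsA⟩
          have := h A hAF
          by_contra hAσ
          simp only [hAσ, if_false, Set.mem_compl_iff] at this
          exact this hsA
        · intro hAσ
          have hAF := hσ hAσ
          have := h A hAF
          simp only [hAσ, if_true] at this
          exact ⟨hAF, this⟩
    rw [hset]
    refine MeasurableSet.biInter F.countable_toSet (fun A _ => ?_)
    by_cases hAσ : A ∈ σ
    · simp only [hAσ, if_true]; exact A.2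
    · simp only [hAσ, if_false]; exact A.2.compl
  · have hset : (tauF F ⁻¹' {σ}) = ∅ := by
      ext s
      simp only [Set.mem_preimage, Set.mem_singleton_iff, Set.mem_empty_iff_false, iff_false]
      intro h
      exact hσ (h ▸ fun A hA => (tauF_mem.mp hA).1)
    rw [hset]
    exact MeasurableSet.empty

/-- Master lemma: the integral of `b + ∑_{A ∈ F} c_A 1_A` is `b + ∑ c_A p(A)`. -/
lemma fInt_indsum {p : MSet S → ℝ} (hp : p ∈ ProbCharges S) (F : Finset (MSet S))
    (c : MSet S → ℝ) (b : ℝ) :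
    fInt p (fun s => b + ∑ A ∈ F, Set.indicator A.1 (fun _ => c A) s)
      = b + ∑ A ∈ F, c A * p A := by
  classical
  have hfun : (fun s => b + ∑ A ∈ F, Set.indicator A.1 (fun _ => c A) s)
      = fun s => (fun σ => b + ∑ A ∈ σ, c A) (tauF F s) := by
    funext s
    show _ = b + ∑ A ∈ tauF F s, c A
    congr 1
    have hterm : ∀ A ∈ F, Set.indicator A.1 (fun _ => c A) s
        = if A ∈ tauF F s then c A else 0 := by
      intro A hA
      by_cases h : s ∈ A.1
      · rw [Set.indicator_of_mem h, if_pos (tauF_mem.mpr ⟨hA, h⟩)]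
      · rw [Set.indicator_of_notMem h, if_neg (fun hc => h (tauF_mem.mp hc).2)]
    rw [Finset.sum_congr rfl hterm, Finset.sum_ite_mem,
      Finset.inter_eq_right.mpr (fun A h => (tauF_mem.mp h).1)]
  rw [hfun]
  rw [fInt_partition hp (tauF F) F.powerset (tauF_mem_powerset F)
    (tauF_measurable F) (fun σ => b + ∑ A ∈ σ, c A)]
  have hdisj : ∀ σ ∈ F.powerset, ∀ σ' ∈ F.powerset, σ ≠ σ' →
      Disjoint (tauF F ⁻¹' {σ}) (tauF F ⁻¹' {σ'}) := by
    intro σ _ σ' _ hne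
    apply Set.disjoint_left.mpr
    intro s hs hs'
    exact hne ((Set.mem_preimage.mp hs).symm.trans (Set.mem_preimage.mp hs'))
  -- total mass is 1
  have hcover : (⋃ σ ∈ F.powerset, tauF F ⁻¹' {σ}) = Set.univ := by
    ext s
    simp only [Set.mem_iUnion, Set.mem_univ, iff_true, Set.mem_preimage,
      Set.mem_singleton_iff]
    exact ⟨tauF F s, tauF_mem_powerset F s, rfl⟩
  have htot : ∑ σ ∈ F.powerset, p ⟨tauF F ⁻¹' {σ}, tauF_measurable F σ⟩ = 1 := by
    have := padd hp (fun σ => (⟨tauF F ⁻¹' {σ}, tauF_measurable F σ⟩ : MSet S)) F.powerset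
      hdisj (MeasurableSet.biUnion F.powerset.countable_toSet
        (fun σ _ => tauF_measurable F σ))
    rw [p_congr p (ht := MeasurableSet.univ) hcover, hp.2.1] at this
    exact this.symm
  -- the event A is the union of the atoms containing it
  have hA : ∀ A ∈ F, ∑ σ ∈ F.powerset.filter (fun σ => A ∈ σ),
      p ⟨tauF F ⁻¹' {σ}, tauF_measurable F σ⟩ = p A := by
    intro A hAF
    have hcov : (⋃ σ ∈ F.powerset.filter (fun σ => A ∈ σ), tauF F ⁻¹' {σ}) = A.1 := by
      ext s
      simp only [Set.mem_iUnion, Set.mem_preimage, Set.mem_singleton_iff,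
        Finset.mem_filter]
      constructor
      · rintro ⟨σ, ⟨_, hAσ⟩, (rfl : tauF F s = σ)⟩
        exact (tauF_mem.mp hAσ).2
      · intro hsA
        exact ⟨tauF F s, ⟨tauF_mem_powerset F s, tauF_mem.mpr ⟨hAF, hsA⟩⟩, rfl⟩
    have := padd hp (fun σ => (⟨tauF F ⁻¹' {σ}, tauF_measurable F σ⟩ : MSet S))
      (F.powerset.filter (fun σ => A ∈ σ))
      (fun σ hσ σ' hσ' => hdisj σ (Finset.mem_of_mem_filter σ hσ) σ'
        (Finset.mem_of_mem_filter σ' hσ'))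
      (MeasurableSet.biUnion (F.powerset.filter _).countable_toSet
        (fun σ _ => tauF_measurable F σ))
    rw [p_congr p (ht := A.2) hcov] at this
    have heta : p ⟨A.1, A.2⟩ = p A := rfl
    rw [heta] at this
    exact this.symm
  -- compute
  calc ∑ σ ∈ F.powerset, (b + ∑ A ∈ σ, c A) * p ⟨tauF F ⁻¹' {σ}, tauF_measurable F σ⟩
      = b * ∑ σ ∈ F.powerset, p ⟨tauF F ⁻¹' {σ}, tauF_measurable F σ⟩
        + ∑ σ ∈ F.powerset, (∑ A ∈ σ, c A) * p ⟨tauF F ⁻¹' {σ}, tauF_measurable F σ⟩ := by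
        rw [Finset.mul_sum, ← Finset.sum_add_distrib]
        exact Finset.sum_congr rfl (fun σ _ => by ring)
    _ = b + ∑ A ∈ F, c A * p A := by
        rw [htot, mul_one]
        congr 1
        have hswap : ∀ σ ∈ F.powerset, (∑ A ∈ σ, c A) = ∑ A ∈ F, if A ∈ σ then c A else 0 := by
          intro σ hσ
          rw [← Finset.sum_filter]
          congr 1
          apply Finset.ext
          intro A
          simp only [Finset.mem_filter]
          exact ⟨fun h => ⟨Finset.mem_powerset.mp hσ h, h⟩, fun h => h.2⟩
        calc ∑ σ ∈ F.powerset, (∑ A ∈ σ, c A) * p ⟨tauF F ⁻¹' {σ}, tauF_measurable F σ⟩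
            = ∑ σ ∈ F.powerset, ∑ A ∈ F,
                (if A ∈ σ then c A else 0) * p ⟨tauF F ⁻¹' {σ}, tauF_measurable F σ⟩ := by
              refine Finset.sum_congr rfl (fun σ hσ => ?_)
              rw [hswap σ hσ, Finset.sum_mul]
          _ = ∑ A ∈ F, ∑ σ ∈ F.powerset,
                (if A ∈ σ then c A else 0) * p ⟨tauF F ⁻¹' {σ}, tauF_measurable F σ⟩ :=
              Finset.sum_comm
          _ = ∑ A ∈ F, c A * p A := by
              refine Finset.sum_congr rfl (fun A hAF => ?_)
              rw [← hA A hAF, Finset.mul_sum, Finset.sum_filter]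
              refine Finset.sum_congr rfl (fun σ _ => ?_)
              split_ifs <;> simp

end Aux


section Aux2

variable {S : Type*} [MeasurableSpace S] {V : Type*} [AddCommGroup V] [Module ℝ V]

lemma constAct_isAct {X : Set V} {x : V} (hx : x ∈ X) : IsAct X (constAct S x) := by
  refine ⟨fun _ => hx, (Set.finite_singleton x).subset ?_, fun v => ?_⟩
  · rintro _ ⟨s, rfl⟩; rfl
  · by_cases h : v = x
    · subst h
      have : (constAct S v ⁻¹' {v}) = Set.univ := by
        ext s; simp [constAct]
      rw [this]; exact MeasurableSet.univ
    · have : (constAct S x ⁻¹' {v}) = ∅ := by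
        ext s; simp [constAct, Ne.symm h, h]
      rw [this]; exact MeasurableSet.empty

lemma EU_const {p : MSet S → ℝ} (hp : p ∈ ProbCharges S) (u : V → ℝ) (x : V) :
    EU u (constAct S x) p = u x := by
  have h := fInt_indsum hp (∅ : Finset (MSet S)) (fun _ => 0) (u x)
  simpa [EU, constAct] using h

lemma EU_global_bounds [Nonempty S] {X : Set V} {u : V → ℝ} {f : S → V} (hf : IsAct X f) :
    ∃ m M : ℝ, (∃ x ∈ X, u x = m) ∧ (∃ x ∈ X, u x = M) ∧
      ∀ p ∈ ProbCharges S, m ≤ EU u f p ∧ EU u f p ≤ M := by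
  classical
  obtain ⟨s₀⟩ := ‹Nonempty S›
  set T := hf.2.1.toFinset with hT
  have hTmem : ∀ s : S, f s ∈ T := fun s => hf.2.1.mem_toFinset.mpr ⟨s, rfl⟩
  have hTne : (T.image u).Nonempty := ⟨u (f s₀), Finset.mem_image_of_mem u (hTmem s₀)⟩
  set m := (T.image u).min' hTne with hm
  set M := (T.image u).max' hTne with hM
  obtain ⟨v₁, hv₁T, hv₁⟩ := Finset.mem_image.mp ((T.image u).min'_mem hTne)
  obtain ⟨v₂, hv₂T, hv₂⟩ := Finset.mem_image.mp ((T.image u).max'_mem hTne)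
  obtain ⟨s₁, rfl⟩ := hf.2.1.mem_toFinset.mp hv₁T
  obtain ⟨s₂, rfl⟩ := hf.2.1.mem_toFinset.mp hv₂T
  refine ⟨m, M, ⟨f s₁, hf.1 s₁, hv₁⟩, ⟨f s₂, hf.1 s₂, hv₂⟩, fun p hp => ?_⟩
  have hrepr : EU u f p = ∑ v ∈ T, u v * p ⟨f ⁻¹' {v}, hf.2.2 v⟩ :=
    fInt_partition hp f T hTmem hf.2.2 u
  have hdisj : ∀ v ∈ T, ∀ w ∈ T, v ≠ w → Disjoint (f ⁻¹' {v}) (f ⁻¹' {w}) := by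
    intro v _ w _ hvw
    apply Set.disjoint_left.mpr
    intro s hsv hsw
    exact hvw ((Set.mem_preimage.mp hsv).symm.trans (Set.mem_preimage.mp hsw))
  have hcov : (⋃ v ∈ T, f ⁻¹' {v}) = Set.univ := by
    ext s
    simp only [Set.mem_iUnion, Set.mem_univ, iff_true, Set.mem_preimage,
      Set.mem_singleton_iff]
    exact ⟨f s, hTmem s, rfl⟩
  have htot : ∑ v ∈ T, p ⟨f ⁻¹' {v}, hf.2.2 v⟩ = 1 := by
    have := padd hp (fun v => (⟨f ⁻¹' {v}, hf.2.2 v⟩ : MSet S)) T hdisj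
      (MeasurableSet.biUnion T.countable_toSet (fun v _ => hf.2.2 v))
    rw [p_congr p (ht := MeasurableSet.univ) hcov, hp.2.1] at this
    exact this.symm
  constructor
  · calc m = ∑ v ∈ T, m * p ⟨f ⁻¹' {v}, hf.2.2 v⟩ := by
          rw [← Finset.mul_sum, htot, mul_one]
      _ ≤ ∑ v ∈ T, u v * p ⟨f ⁻¹' {v}, hf.2.2 v⟩ := by
          refine Finset.sum_le_sum (fun v hv => ?_)
          exact mul_le_mul_of_nonneg_right
            (Finset.min'_le _ _ (Finset.mem_image_of_mem u hv)) (hp.1 _)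
      _ = EU u f p := hrepr.symm
  · calc EU u f p = ∑ v ∈ T, u v * p ⟨f ⁻¹' {v}, hf.2.2 v⟩ := hrepr
      _ ≤ ∑ v ∈ T, M * p ⟨f ⁻¹' {v}, hf.2.2 v⟩ := by
          refine Finset.sum_le_sum (fun v hv => ?_)
          exact mul_le_mul_of_nonneg_right
            (Finset.le_max' _ _ (Finset.mem_image_of_mem u hv)) (hp.1 _)
      _ = M := by rw [← Finset.mul_sum, htot, mul_one]

lemma bddBelow_EU [Nonempty S] {X : Set V} {u : V → ℝ} {f : S → V} (hf : IsAct X f)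
    {C : Set (MSet S → ℝ)} (hC : C ⊆ ProbCharges S) : BddBelow (EU u f '' C) := by
  obtain ⟨m, M, _, _, hb⟩ := EU_global_bounds hf
  exact ⟨m, by rintro _ ⟨p, hp, rfl⟩; exact (hb p (hC hp)).1⟩

lemma bddAbove_EU [Nonempty S] {X : Set V} {u : V → ℝ} {f : S → V} (hf : IsAct X f)
    {C : Set (MSet S → ℝ)} (hC : C ⊆ ProbCharges S) : BddAbove (EU u f '' C) := by
  obtain ⟨m, M, _, _, hb⟩ := EU_global_bounds hf
  exact ⟨M, by rintro _ ⟨p, hp, rfl⟩; exact (hb p (hC hp)).2⟩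

lemma minEU_le_EU [Nonempty S] {X : Set V} {u : V → ℝ} {f : S → V} (hf : IsAct X f)
    {C : Set (MSet S → ℝ)} (hC : C ⊆ ProbCharges S) {p : MSet S → ℝ} (hp : p ∈ C) :
    minEU u C f ≤ EU u f p :=
  csInf_le (bddBelow_EU hf hC) ⟨p, hp, rfl⟩

lemma EU_le_maxEU [Nonempty S] {X : Set V} {u : V → ℝ} {f : S → V} (hf : IsAct X f)
    {D : Set (MSet S → ℝ)} (hD : D ⊆ ProbCharges S) {p : MSet S → ℝ} (hp : p ∈ D) :
    EU u f p ≤ maxEU u D f :=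
  le_csSup (bddAbove_EU hf hD) ⟨p, hp, rfl⟩

lemma minEU_const {u : V → ℝ} {x : V} {C : Set (MSet S → ℝ)} (hCne : C.Nonempty)
    (hC : C ⊆ ProbCharges S) : minEU u C (constAct S x) = u x := by
  have himg : EU u (constAct S x) '' C = {u x} := by
    apply Set.eq_singleton_iff_nonempty_unique_mem.mpr
    exact ⟨⟨_, ⟨hCne.choose, hCne.choose_spec, rfl⟩⟩,
      by rintro _ ⟨p, hp, rfl⟩; exact EU_const (hC hp) u x⟩
  rw [minEU, himg, csInf_singleton]

lemma maxEU_const {u : V → ℝ} {x : V} {D : Set (MSet S → ℝ)} (hDne : D.Nonempty)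
    (hD : D ⊆ ProbCharges S) : maxEU u D (constAct S x) = u x := by
  have himg : EU u (constAct S x) '' D = {u x} := by
    apply Set.eq_singleton_iff_nonempty_unique_mem.mpr
    exact ⟨⟨_, ⟨hDne.choose, hDne.choose_spec, rfl⟩⟩,
      by rintro _ ⟨p, hp, rfl⟩; exact EU_const (hD hp) u x⟩
  rw [maxEU, himg, csSup_singleton]

/-- For a hope-and-prepare representation, preference over a constant act is
equivalent to a strict lower bound on the worst-case expected utility. -/
lemma R_const_iff [Nonempty S] {X : Set V} {R : (S → V) → (S → V) → Prop} {u : V → ℝ}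
    {C D : Set (MSet S → ℝ)} (hrep : IsHPRep X R u C D) {f : S → V} (hf : IsAct X f)
    {x : V} (hx : x ∈ X) :
    R f (constAct S x) ↔ u x < minEU u C f := by
  obtain ⟨hu, hnc, hCne, hDne, hCP, hDP, hCcomp, hDcomp, hCconv, hDconv, hCD, hiff⟩ := hrep
  rw [hiff f (constAct S x) hf (constAct_isAct hx), minEU_const hCne hCP,
    maxEU_const hDne hDP]
  constructor
  · exact fun h => h.1
  · intro h
    refine ⟨h, lt_of_lt_of_le h ?_⟩
    obtain ⟨p₀, hp₀C, hp₀D⟩ := hCD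
    exact le_trans (minEU_le_EU hf hCP hp₀C) (EU_le_maxEU hf hDP hp₀D)

lemma exists_mem_u_interval {X : Set V} (hX : Convex ℝ X) {u : V → ℝ}
    (hu : IsAffineOn u X) {x₁ x₂ : V} {t : ℝ} (hx₁ : x₁ ∈ X) (hx₂ : x₂ ∈ X)
    (h1 : u x₁ ≤ t) (h2 : t ≤ u x₂) : ∃ x ∈ X, u x = t := by
  rcases eq_or_lt_of_le h1 with heq | hlt
  · exact ⟨x₁, hx₁, heq⟩
  · have hne : u x₂ - u x₁ ≠ 0 := by linarith
    set α : ℝ := (u x₂ - t) / (u x₂ - u x₁) with hα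
    have hα0 : 0 ≤ α := div_nonneg (by linarith) (by linarith)
    have hα1 : α ≤ 1 := by
      rw [hα, div_le_one (by linarith)]
      linarith
    refine ⟨α • x₁ + (1 - α) • x₂, hX hx₁ hx₂ hα0 (by linarith) (by ring), ?_⟩
    rw [hu x₁ hx₁ x₂ hx₂ α hα0 hα1, hα]
    field_simp
    ring

end Aux2

section Statement

variable {S : Type*} [MeasurableSpace S] [Nonempty S]
variable {V : Type*} [AddCommGroup V] [Module ℝ V]

set_option maxHeartbeats 1000000 in
/-- Proposition 2(i): for hope-and-prepare preferences `≻₁`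
and `≻₂` with representations `(u, C₁, D₁)` and `(u, C₂, D₂)`, `≻₁` is more
ambiguity averse than `≻₂` iff `C₂ ⊆ C₁`. -/
theorem statement6 (X : Set V) (hX : Convex ℝ X) (hX2 : ∃ x ∈ X, ∃ y ∈ X, x ≠ y)
    (R1 R2 : (S → V) → (S → V) → Prop) (u : V → ℝ)
    (C1 D1 C2 D2 : Set (MSet S → ℝ))
    (h1 : IsHPRep X R1 u C1 D1) (h2 : IsHPRep X R2 u C2 D2) :
    (∀ f, IsAct X f → ∀ x ∈ X, R1 f (constAct S x) → R2 f (constAct S x)) ↔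
      C2 ⊆ C1 := by
  classical
  constructor
  · -- more ambiguity averse → C2 ⊆ C1
    intro H
    -- Step 1: worst-case expected utilities are ordered
    have hkey : ∀ f, IsAct X f → minEU u C1 f ≤ minEU u C2 f := by
      intro f hf
      by_contra hlt
      push_neg at hlt
      obtain ⟨m, M, ⟨xm, hxm, hxmu⟩, ⟨xM, hxM, hxMu⟩, hb⟩ := EU_global_bounds (u := u) hf
      obtain ⟨p₁, hp₁⟩ := h1.2.2.1
      obtain ⟨p₂, hp₂⟩ := h2.2.2.1
      have h1lb : m ≤ minEU u C1 f :=
        le_csInf ⟨_, ⟨p₁, hp₁, rfl⟩⟩ (by rintro _ ⟨p, hp, rfl⟩; exact (hb p (h1.2.2.2.2.1 hp)).1)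
      have h2lb : m ≤ minEU u C2 f :=
        le_csInf ⟨_, ⟨p₂, hp₂, rfl⟩⟩ (by rintro _ ⟨p, hp, rfl⟩; exact (hb p (h2.2.2.2.2.1 hp)).1)
      have h1ub : minEU u C1 f ≤ M :=
        le_trans (minEU_le_EU hf h1.2.2.2.2.1 hp₁) (hb p₁ (h1.2.2.2.2.1 hp₁)).2
      have h2ub : minEU u C2 f ≤ M :=
        le_trans (minEU_le_EU hf h2.2.2.2.2.1 hp₂) (hb p₂ (h2.2.2.2.2.1 hp₂)).2
      set t := (minEU u C2 f + minEU u C1 f) / 2 with ht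
      obtain ⟨x, hxX, hxu⟩ := exists_mem_u_interval hX h1.1 hxm hxM
        (t := t) (by rw [hxmu]; linarith) (by rw [hxMu]; linarith)
      have hR1 : R1 f (constAct S x) :=
        (R_const_iff h1 hf hxX).mpr (by rw [hxu]; linarith)
      have hR2 := H f hf x hxX hR1
      rw [R_const_iff h2 hf hxX, hxu] at hR2
      linarith
    -- Step 2: separation argument
    intro q hqC2
    by_contra hqC1
    have hC1P := h1.2.2.2.2.1
    have hC2P := h2.2.2.2.2.1
    have hopen : IsOpen C1ᶜ := (h1.2.2.2.2.2.2.1.isClosed).isOpen_compl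
    obtain ⟨I, w, hw, hwsub⟩ := isOpen_pi_iff.mp hopen q hqC1
    set πL : (MSet S → ℝ) →ₗ[ℝ] ({A // A ∈ I} → ℝ) :=
      LinearMap.pi (fun i : {A // A ∈ I} => LinearMap.proj (i.1 : MSet S)) with hπL
    have hπcont : Continuous πL := continuous_pi (fun i => continuous_apply (i.1 : MSet S))
    set K := πL '' C1 with hK
    have hKconv : Convex ℝ K := (h1.2.2.2.2.2.2.2.2.1).linear_image πL
    have hKcomp : IsCompact K := (h1.2.2.2.2.2.2.1).image hπcont
    have hqK : πL q ∉ K := by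
      rintro ⟨p, hpC1, hpq⟩
      apply hwsub _ hpC1
      intro A hA
      have hA' : A ∈ I := hA
      have : p A = q A := congrFun hpq ⟨A, hA'⟩
      rw [this]
      exact (hw A hA').2
    obtain ⟨ℓ, t, hlt, htq⟩ :=
      geometric_hahn_banach_closed_point hKconv hKcomp.isClosed hqK
    set g : {A // A ∈ I} → ℝ := fun i => -(ℓ (fun j => if i = j then 1 else 0)) with hg
    set c : MSet S → ℝ := fun A => if h : A ∈ I then g ⟨A, h⟩ else 0 with hc
    have hcsum : ∀ p : MSet S → ℝ, ∑ A ∈ I, c A * p A = -(ℓ (πL p)) := by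
      intro p
      have h0 := LinearMap.pi_apply_eq_sum_univ (ℓ.toLinearMap) (πL p)
      have h0' : ℓ (πL p) = ∑ i : {A // A ∈ I}, πL p i • ℓ (fun j => if i = j then 1 else 0) := h0
      rw [← Finset.sum_coe_sort I (fun A => c A * p A), h0', ← Finset.sum_neg_distrib]
      refine Finset.sum_congr rfl (fun i _ => ?_)
      have hci : c i.1 = g i := by rw [hc]; exact dif_pos i.2
      have hπi : πL p i = p i.1 := rfl
      rw [hci, hπi, hg, smul_eq_mul]
      ring
    set t₀ : ℝ := -t with ht₀
    have hC1sep : ∀ p ∈ C1, t₀ < ∑ A ∈ I, c A * p A := by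
      intro p hp
      rw [hcsum p, ht₀]
      exact neg_lt_neg (hlt (πL p) ⟨p, hp, rfl⟩)
    have hqsep : ∑ A ∈ I, c A * q A < t₀ := by
      rw [hcsum q, ht₀]
      exact neg_lt_neg htq
    -- Step 3: build the separating act
    obtain ⟨xa, hxa, xb, hxb, hne⟩ := h1.2.1
    obtain ⟨x₀, hx₀, x₁, hx₁, hult⟩ : ∃ x₀ ∈ X, ∃ x₁ ∈ X, u x₀ < u x₁ := by
      rcases lt_or_gt_of_ne hne with h | h
      exacts [⟨xa, hxa, xb, hxb, h⟩, ⟨xb, hxb, xa, hxa, h⟩]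
    set K₀ : ℝ := ∑ A ∈ I, |c A| with hK₀def
    have hK₀ : 0 ≤ K₀ := Finset.sum_nonneg (fun A _ => abs_nonneg _)
    set d : ℝ := 2 * K₀ + 1 with hd_def
    have hd : 0 < d := by rw [hd_def]; linarith
    set a : ℝ := (u x₁ - u x₀) / d with ha_def
    have ha : 0 < a := div_pos (by linarith) hd
    set φ : S → ℝ := fun s => ∑ A ∈ I, Set.indicator A.1 (fun _ => c A) s with hφ_def
    have hφbound : ∀ s, |φ s| ≤ K₀ := by
      intro s
      rw [hφ_def, hK₀def]
      refine (Finset.abs_sum_le_sum_abs _ _).trans (Finset.sum_le_sum (fun A _ => ?_))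
      by_cases h : s ∈ A.1
      · rw [Set.indicator_of_mem h]
      · rw [Set.indicator_of_notMem h, abs_zero]
        exact abs_nonneg _
    set lam : S → ℝ := fun s => (φ s + K₀) / d with hlam_def
    have hlam0 : ∀ s, 0 ≤ lam s := by
      intro s
      have := abs_le.mp (hφbound s)
      exact div_nonneg (by linarith [this.1]) hd.le
    have hlam1 : ∀ s, lam s ≤ 1 := by
      intro s
      have := abs_le.mp (hφbound s)
      rw [hlam_def, div_le_one hd]
      show φ s + K₀ ≤ d
      rw [hd_def]
      linarith [this.2]
    set g₂ : ℝ → V := fun y => ((y + K₀) / d) • x₁ + (1 - (y + K₀) / d) • x₀ with hg₂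
    set f : S → V := fun s => g₂ (φ s) with hf_def
    have hfs : ∀ s, f s = lam s • x₁ + (1 - lam s) • x₀ := fun s => rfl
    -- φ is simple
    have hφeq : φ = fun s => (fun σ => ∑ A ∈ σ, c A) (tauF I s) := by
      funext s
      simp only [hφ_def]
      have hterm : ∀ A ∈ I, Set.indicator A.1 (fun _ => c A) s
          = if A ∈ tauF I s then c A else 0 := by
        intro A hA
        by_cases h : s ∈ A.1
        · rw [Set.indicator_of_mem h, if_pos (tauF_mem.mpr ⟨hA, h⟩)]
        · rw [Set.indicator_of_notMem h, if_neg (fun hcon => h (tauF_mem.mp hcon).2)]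
      rw [Finset.sum_congr rfl hterm, Finset.sum_ite_mem,
        Finset.inter_eq_right.mpr (fun A h => (tauF_mem.mp h).1)]
    have hτr : (Set.range (tauF I)).Finite := by
      refine I.powerset.finite_toSet.subset ?_
      rintro _ ⟨s, rfl⟩
      exact tauF_mem_powerset I s
    have hφsimple : (Set.range φ).Finite ∧ ∀ y : ℝ, MeasurableSet (φ ⁻¹' {y}) := by
      rw [hφeq]
      exact comp_simple hτr (tauF_measurable I) (fun σ => ∑ A ∈ σ, c A)
    -- f is an act
    have hfact : IsAct X f := by
      refine ⟨fun s => ?_, ?_, ?_⟩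
      · rw [hfs s]
        exact hX hx₁ hx₀ (hlam0 s) (by linarith [hlam1 s]) (by ring)
      · exact (comp_simple hφsimple.1 hφsimple.2 g₂).1
      · exact (comp_simple hφsimple.1 hφsimple.2 g₂).2
    -- expected utility of f
    have hufs : ∀ s, u (f s) = (u x₀ + a * K₀) + a * φ s := by
      intro s
      rw [hfs s, h1.1 x₁ hx₁ x₀ hx₀ (lam s) (hlam0 s) (hlam1 s), hlam_def, ha_def]
      have hdne : d ≠ 0 := ne_of_gt hd
      field_simp
      ring
    have hIscale : ∀ s, a * φ s = ∑ A ∈ I, Set.indicator A.1 (fun _ => a * c A) s := by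
      intro s
      rw [hφ_def, Finset.mul_sum]
      refine Finset.sum_congr rfl (fun A _ => ?_)
      by_cases h : s ∈ A.1
      · rw [Set.indicator_of_mem h, Set.indicator_of_mem h]
      · rw [Set.indicator_of_notMem h, Set.indicator_of_notMem h, mul_zero]
    have hEU : ∀ p ∈ ProbCharges S, EU u f p = (u x₀ + a * K₀) + a * ∑ A ∈ I, c A * p A := by
      intro p hp
      have heq : EU u f p = fInt p (fun s =>
          (u x₀ + a * K₀) + ∑ A ∈ I, Set.indicator A.1 (fun _ => a * c A) s) := by
        unfold EU
        congr 1
        funext s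
        rw [hufs s, hIscale s]
      rw [heq, fInt_indsum hp I (fun A => a * c A) _]
      congr 1
      rw [Finset.mul_sum]
      exact Finset.sum_congr rfl (fun A _ => by ring)
    -- contradiction
    set b₀ : ℝ := (u x₀ + a * K₀) + a * t₀ with hb₀
    have hminC1 : b₀ ≤ minEU u C1 f := by
      refine le_csInf ⟨_, ⟨_, h1.2.2.1.choose_spec, rfl⟩⟩ ?_
      rintro _ ⟨p, hp, rfl⟩
      rw [hEU p (hC1P hp), hb₀]
      have := hC1sep p hp
      nlinarith
    have hminC2 : minEU u C2 f < b₀ := by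
      refine lt_of_le_of_lt (minEU_le_EU hfact hC2P hqC2) ?_
      rw [hEU q (hC2P hqC2), hb₀]
      nlinarith
    have := hkey f hfact
    linarith
  · -- C2 ⊆ C1 → more ambiguity averse
    intro hsub f hf x hx hR1
    rw [R_const_iff h1 hf hx] at hR1
    rw [R_const_iff h2 hf hx]
    refine lt_of_lt_of_le hR1 ?_
    exact csInf_le_csInf (bddBelow_EU hf h1.2.2.2.2.1)
      ((h2.2.2.1).image _) (Set.image_mono hsub)

end Statement
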